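/- arXiv:2507.22497 — 4 statements merged into one kernel-verified Lean document; each statement's English description precedes it below -/
import Mathlib

section
/- Let I be a monomial ideal in k[x_1,…,x_n] with minimal generator exponent vectors m_1,…,m_r, and let μ = μ_I, ν = ν_I, ms = μ − ν. Define φ on the vertex set of EK^{μ}_I by φ(i,k) = (i, k + ν_i) for 1 ≤ k ≤ ms_i. Then φ is an injection into the vertex set {(i,k) : 1 ≤ k ≤ μ_i} of the polarized ring, and φ induces an isomorphism of simplicial complexes EK^{μ_I}_I ≅ K^{𝟙}_{P(I)}: for every σ contained in the vertex set of EK^{μ_I}_I, σ ∈ EK^{μ_I}_I if and only if φ(σ) ∈ K^{𝟙}_{P(I)}, and moreover every face of K^{𝟙}_{P(I)} is of the form φ(σ) for some such σ (in particular no face of K^{𝟙}_{P(I)} contains a vertex (i,k) with k ≤ ν_i). -/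
/-- Let `I` be a monomial ideal in `k[x_1,…,x_n]` with minimal generator
exponent vectors `m_1,…,m_r`, let `μ = μ_I` (componentwise max), `ν = ν_I` (componentwise
min) and `ms = μ - ν`.  A face of the expanded Koszul complex `EK^{μ}_I` is a subset of a
facet `F(μ - m_j) = {(i,k) : ms_i - (μ_i - m_j i) < k ≤ ms_i}`; a face of
`K^𝟙_{P(I)}` is a subset `σ` of the polarized vertex set `{(i,k) : 1 ≤ k ≤ μ_i}` whose
complement contains the support `{(i,k) : 1 ≤ k ≤ (m_j)_i}` of some polarized generator.
Define `φ(i,k) = (i, k + ν_i)`.  Then `φ` is an injection of the vertex set of `EK^{μ}_I`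
into the vertex set of the polarized ring, and `φ` induces an isomorphism
`EK^{μ_I}_I ≅ K^𝟙_{P(I)}`: for every `σ` contained in the vertex set of `EK^{μ_I}_I`,
`σ ∈ EK^{μ_I}_I` iff `φ(σ) ∈ K^𝟙_{P(I)}`; moreover every face of `K^𝟙_{P(I)}` is of the
form `φ(σ)` for such a `σ` (in particular no face of `K^𝟙_{P(I)}` contains a vertex
`(i,k)` with `k ≤ ν_i`). -/
theorem expandedKoszul_iso_koszul_of_polarization {n r : ℕ}
    (m : Fin r → Fin n → ℕ)
    (hmin : ∀ j j' : Fin r, m j ≤ m j' → j = j')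
    (μ ν : Fin n → ℕ)
    (hμ : ∀ i, IsGreatest (Set.range fun j => m j i) (μ i))
    (hν : ∀ i, IsLeast (Set.range fun j => m j i) (ν i)) :
    let ms : Fin n → ℕ := fun i => μ i - ν i
    let EKmem : Finset (Fin n × ℕ) → Prop := fun σ =>
      ∃ j, ∀ p ∈ σ, ms p.1 - (μ p.1 - m j p.1) < p.2 ∧ p.2 ≤ ms p.1
    let KPmem : Finset (Fin n × ℕ) → Prop := fun σ =>
      (∀ p ∈ σ, 1 ≤ p.2 ∧ p.2 ≤ μ p.1) ∧
        ∃ j, ∀ i : Fin n, ∀ k : ℕ, 1 ≤ k → k ≤ m j i → (i, k) ∉ σ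
    let φ : Fin n × ℕ → Fin n × ℕ := fun p => (p.1, p.2 + ν p.1)
    Function.Injective φ ∧
    (∀ p : Fin n × ℕ, 1 ≤ p.2 → p.2 ≤ ms p.1 → 1 ≤ (φ p).2 ∧ (φ p).2 ≤ μ (φ p).1) ∧
    (∀ σ : Finset (Fin n × ℕ), (∀ p ∈ σ, 1 ≤ p.2 ∧ p.2 ≤ ms p.1) →
      (EKmem σ ↔ KPmem (σ.image φ))) ∧
    (∀ τ : Finset (Fin n × ℕ), KPmem τ →
      (∀ p ∈ τ, ν p.1 < p.2) ∧
      ∃ σ : Finset (Fin n × ℕ), (∀ p ∈ σ, 1 ≤ p.2 ∧ p.2 ≤ ms p.1) ∧ τ = σ.image φ) := by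
  intro ms EKmem KPmem φ
  have hle : ∀ (j : Fin r) (i : Fin n), ν i ≤ m j i := fun j i => (hν i).2 ⟨j, rfl⟩
  have hle' : ∀ (j : Fin r) (i : Fin n), m j i ≤ μ i := fun j i => (hμ i).2 ⟨j, rfl⟩
  have hνμ : ∀ i, ν i ≤ μ i := fun i => by
    obtain ⟨j, hj⟩ := (hν i).1
    exact hj ▸ hle' j i
  refine ⟨?_, ?_, ?_, ?_⟩
  · rintro ⟨i, k⟩ ⟨i', k'⟩ h
    simp only [φ, Prod.mk.injEq] at h
    obtain ⟨h1, h2⟩ := h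
    subst h1
    simp only [Prod.mk.injEq, true_and]
    omega
  · intro p h1 h2
    have := hνμ p.1
    simp only [φ, ms] at h2 ⊢
    omega
  · intro σ hσ
    simp only [EKmem, KPmem]
    constructor
    · rintro ⟨j, hj⟩
      refine ⟨?_, j, ?_⟩
      · intro q hq
        simp only [Finset.mem_image] at hq
        obtain ⟨p, hp, rfl⟩ := hq
        obtain ⟨h1, h2⟩ := hσ p hp
        have := hνμ p.1
        simp only [φ, ms] at h2 ⊢
        omega
      · intro i k h1 h2 hmem
        simp only [Finset.mem_image] at hmem
        obtain ⟨p, hp, heq⟩ := hmem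
        simp only [φ, Prod.mk.injEq] at heq
        obtain ⟨rfl, rfl⟩ := heq
        have h3 := hj p hp
        have h4 := hle j p.1
        have h5 := hle' j p.1
        simp only [ms] at h3
        omega
    · rintro ⟨hbnd, j, hj⟩
      refine ⟨j, fun p hp => ?_⟩
      obtain ⟨h1, h2⟩ := hσ p hp
      have h4 := hle j p.1
      have h5 := hle' j p.1
      have hnot : ¬ (p.2 + ν p.1 ≤ m j p.1) := fun hle2 =>
        hj p.1 (p.2 + ν p.1) (by omega) hle2
          (by simpa [φ] using Finset.mem_image_of_mem φ hp)
      simp only [ms] at h2 ⊢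
      omega
  · rintro τ ⟨hbnd, j, hj⟩
    have hgt : ∀ p ∈ τ, ν p.1 < p.2 := by
      intro p hp
      obtain ⟨h1, h2⟩ := hbnd p hp
      by_contra hc
      have h4 := hle j p.1
      exact hj p.1 p.2 h1 (by omega) (by rw [Prod.mk.eta]; exact hp)
    refine ⟨hgt, τ.image (fun p => (p.1, p.2 - ν p.1)), ?_, ?_⟩
    · intro q hq
      simp only [Finset.mem_image] at hq
      obtain ⟨p, hp, rfl⟩ := hq
      obtain ⟨h1, h2⟩ := hbnd p hp
      have h3 := hgt p hp
      simp only [ms]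
      omega
    · ext q
      simp only [Finset.mem_image]
      constructor
      · intro hq
        refine ⟨(q.1, q.2 - ν q.1), ⟨q, hq, rfl⟩, ?_⟩
        have h3 := hgt q hq
        simp only [φ]
        ext <;> simp <;> omega
      · rintro ⟨p, ⟨p', hp', rfl⟩, rfl⟩
        have h3 := hgt p' hp'
        simp only [φ]
        have : (p'.1, p'.2 - ν p'.1 + ν p'.1) = p' := by
          ext <;> simp <;> omega
        rw [this]
        exact hp'
end

section
/- Let I be a monomial ideal in k[x_1,…,x_n] with minimal generator exponent vectors m_1,…,m_r, μ = μ_I, ms = μ_I − ν_I. For α ∈ ℕ^n with α ≤ ms componentwise, let F(α) = ⋃_{i=1}^n {(i,k) : ms_i − α_i < k ≤ ms_i}. Then the simplicial complex generated by the sets F(α), taken over all σ ∈ K^{μ}_I and all α that are maximal (with respect to componentwise order) among those satisfying α ≤ ms, supp(α) = σ, and x^{μ−α} ∈ I, coincides with the simplicial complex generated by the r sets F(μ − m_j), j = 1,…,r. (Equivalently: the two constructions of the expanded Koszul complex EK^{μ_I}_I — step 2 and step 2′ in the paper — yield the same complex.) -/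
/-- The indicator (exponent) vector `χ_σ` of a subset `σ ⊆ [n]`. -/
def chi {n : ℕ} (σ : Finset (Fin n)) : Fin n → ℕ := fun i => if i ∈ σ then 1 else 0

/-- Let `I` be a monomial ideal with minimal generator exponent vectors
`m_1,…,m_r`, `μ = μ_I`, `ms = μ_I - ν_I`.  For `α ≤ ms` let
`F(α) = ⋃_i {(i,k) : ms_i - α_i < k ≤ ms_i}`.  Then the simplicial complex generated by
the sets `F(α)`, taken over all `σ ∈ K^{μ}_I` and all `α` maximal (componentwise) among
those satisfying `α ≤ ms`, `supp(α) = σ` and `x^{μ-α} ∈ I`, coincides with the simplicial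
complex generated by the `r` sets `F(μ - m_j)`.  (Equivalently: steps 2 and 2′ of the
construction of the expanded Koszul complex `EK^{μ_I}_I` yield the same complex.) -/
theorem expandedKoszul_two_constructions_agree {n r : ℕ}
    (m : Fin r → Fin n → ℕ)
    (hmin : ∀ j j' : Fin r, m j ≤ m j' → j = j')
    (μ ν : Fin n → ℕ)
    (hμ : ∀ i, IsGreatest (Set.range fun j => m j i) (μ i))
    (hν : ∀ i, IsLeast (Set.range fun j => m j i) (ν i)) :
    let ms : Fin n → ℕ := fun i => μ i - ν i
    {τ : Finset (Fin n × ℕ) |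
        ∃ σ : Finset (Fin n), ∃ α : Fin n → ℕ,
          (chi σ ≤ μ ∧ ∃ j, m j ≤ μ - chi σ) ∧
          Maximal (fun β : Fin n → ℕ =>
            β ≤ ms ∧ (∀ i, 0 < β i ↔ i ∈ σ) ∧ ∃ j, m j ≤ μ - β) α ∧
          ∀ p ∈ τ, ms p.1 - α p.1 < p.2 ∧ p.2 ≤ ms p.1}
      = {τ : Finset (Fin n × ℕ) |
          ∃ j, ∀ p ∈ τ, ms p.1 - (μ p.1 - m j p.1) < p.2 ∧ p.2 ≤ ms p.1} := by
  intro ms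
  have hmle : ∀ j i, m j i ≤ μ i := fun j i => (hμ i).2 ⟨j, rfl⟩
  have hνle : ∀ j i, ν i ≤ m j i := fun j i => (hν i).2 ⟨j, rfl⟩
  have hmsle : ∀ i, ms i ≤ μ i := fun i => Nat.sub_le _ _
  ext τ
  simp only [Set.mem_setOf_eq]
  constructor
  · rintro ⟨σ, α, -, hmax, hτ⟩
    obtain ⟨hαms, -, j, hj⟩ := hmax.prop
    refine ⟨j, fun p hp => ?_⟩
    obtain ⟨h1, h2⟩ := hτ p hp
    refine ⟨lt_of_le_of_lt (Nat.sub_le_sub_left ?_ _) h1, h2⟩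
    -- α p.1 ≤ μ p.1 - m j p.1
    have hαμ : α p.1 ≤ μ p.1 := le_trans (hαms p.1) (hmsle p.1)
    have := hj p.1
    simp only [Pi.sub_apply] at this
    omega
  · rintro ⟨j, hτ⟩
    set β₀ : Fin n → ℕ := fun i => μ i - m j i with hβ₀
    set σ : Finset (Fin n) := Finset.univ.filter (fun i => 0 < β₀ i) with hσ
    have hP : (fun β : Fin n → ℕ =>
        β ≤ ms ∧ (∀ i, 0 < β i ↔ i ∈ σ) ∧ ∃ j', m j' ≤ μ - β) β₀ := by
      refine ⟨fun i => ?_, fun i => by simp [hσ], ⟨j, fun i => ?_⟩⟩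
      · show μ i - m j i ≤ μ i - ν i; have := hνle j i; omega
      · simp only [Pi.sub_apply, hβ₀]; have := hmle j i; omega
    -- find a maximal element above β₀
    set S : Set (Fin n → ℕ) := {β | (β ≤ ms ∧ (∀ i, 0 < β i ↔ i ∈ σ) ∧
        ∃ j', m j' ≤ μ - β) ∧ β₀ ≤ β} with hS
    have hSfin : S.Finite := by
      apply (Set.finite_Icc (0 : Fin n → ℕ) ms).subset
      rintro β ⟨⟨h1, -⟩, -⟩
      exact ⟨fun i => Nat.zero_le _, h1⟩
    obtain ⟨α, hαS, hαmax⟩ := Set.Finite.exists_maximalFor id S hSfin ⟨β₀, hP, le_refl _⟩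
    refine ⟨σ, α, ⟨fun i => ?_, ⟨j, fun i => ?_⟩⟩, ⟨hαS.1, fun γ hγ hαγ => ?_⟩,
      fun p hp => ?_⟩
    · -- chi σ ≤ μ
      simp only [chi]
      split
      · rename_i h; simp only [hσ, Finset.mem_filter, hβ₀] at h; omega
      · exact Nat.zero_le _
    · -- m j ≤ μ - chi σ
      simp only [Pi.sub_apply, chi]
      split
      · rename_i h; simp only [hσ, Finset.mem_filter, hβ₀] at h
        have := hmle j i; omega
      · simpa using hmle j i
    · -- maximality
      have hγS : γ ∈ S := ⟨hγ, le_trans hαS.2 hαγ⟩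
      have := hαmax hγS hαγ
      exact this
    · obtain ⟨h1, h2⟩ := hτ p hp
      refine ⟨lt_of_le_of_lt (Nat.sub_le_sub_left (hαS.2 p.1) _) h1, h2⟩
end

section
/- Let I be a monomial ideal in k[x_1,…,x_n] with minimal generator exponent vectors m_1,…,m_r, μ = μ_I, ms = ms(I) = μ_I − ν_I. For every σ ⊆ [n]: σ belongs to the Koszul complex K^{μ}_I if and only if ms_i ≥ 1 for every i ∈ σ and the set {(i, ms_i) : i ∈ σ} is a face of the expanded Koszul complex EK^{μ}_I. In particular, the map σ ↦ {(i, ms_i) : i ∈ σ} is an isomorphism from K^{μ}_I onto the subcomplex of EK^{μ}_I consisting of its faces contained in the set of top vertices {(i, ms_i) : ms_i ≥ 1}. -/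
/-- Let `I` be a monomial ideal with minimal generator exponent vectors
`m_1,…,m_r`, `μ = μ_I`, `ms = μ_I - ν_I`.  For every `σ ⊆ [n]`: `σ` belongs to the Koszul
complex `K^{μ}_I` iff `ms_i ≥ 1` for every `i ∈ σ` and `{(i, ms_i) : i ∈ σ}` is a face of
the expanded Koszul complex `EK^{μ}_I`.  In particular `σ ↦ {(i, ms_i) : i ∈ σ}` is an
isomorphism from `K^{μ}_I` onto the subcomplex of `EK^{μ}_I` of faces contained in the
set of top vertices `{(i, ms_i) : ms_i ≥ 1}` (the map is injective on `K^{μ}_I` and every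
such face of `EK^{μ}_I` arises this way). -/
theorem koszul_iso_top_subcomplex_of_expandedKoszul {n r : ℕ}
    (m : Fin r → Fin n → ℕ)
    (hmin : ∀ j j' : Fin r, m j ≤ m j' → j = j')
    (μ ν : Fin n → ℕ)
    (hμ : ∀ i, IsGreatest (Set.range fun j => m j i) (μ i))
    (hν : ∀ i, IsLeast (Set.range fun j => m j i) (ν i)) :
    let ms : Fin n → ℕ := fun i => μ i - ν i
    let Kmem : Finset (Fin n) → Prop := fun σ => chi σ ≤ μ ∧ ∃ j, m j ≤ μ - chi σ
    let EKmem : Finset (Fin n × ℕ) → Prop := fun τ =>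
      ∃ j, ∀ p ∈ τ, ms p.1 - (μ p.1 - m j p.1) < p.2 ∧ p.2 ≤ ms p.1
    let top : Finset (Fin n) → Finset (Fin n × ℕ) := fun σ => σ.image fun i => (i, ms i)
    (∀ σ : Finset (Fin n), Kmem σ ↔ ((∀ i ∈ σ, 1 ≤ ms i) ∧ EKmem (top σ))) ∧
    (∀ σ σ' : Finset (Fin n), Kmem σ → Kmem σ' → top σ = top σ' → σ = σ') ∧
    (∀ τ : Finset (Fin n × ℕ), EKmem τ → (∀ p ∈ τ, 1 ≤ ms p.1 ∧ p.2 = ms p.1) →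
      ∃ σ : Finset (Fin n), Kmem σ ∧ τ = top σ) := by
  intro ms Kmem EKmem top
  have hmμ : ∀ j i, m j i ≤ μ i := fun j i => (hμ i).2 ⟨j, rfl⟩
  have hνm : ∀ j i, ν i ≤ m j i := fun j i => (hν i).2 ⟨j, rfl⟩
  refine ⟨?_, ?_, ?_⟩
  · intro σ
    constructor
    · rintro ⟨hχ, j, hj⟩
      have hlt : ∀ i ∈ σ, m j i < μ i := by
        intro i hi
        have h1 : 1 ≤ μ i := by have := hχ i; simpa [chi, hi] using this
        have h2 := hj i
        simp only [Pi.sub_apply, chi, hi, if_pos] at h2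
        omega
      constructor
      · intro i hi
        have h1 := hνm j i
        have h2 := hlt i hi
        simp only [ms]; omega
      · refine ⟨j, ?_⟩
        intro p hp
        simp only [top, Finset.mem_image] at hp
        obtain ⟨i, hi, rfl⟩ := hp
        have h1 := hlt i hi
        have h2 := hνm j i
        simp only [ms]
        omega
    · rintro ⟨hms, j, hj⟩
      have hlt : ∀ i ∈ σ, m j i < μ i := by
        intro i hi
        have h1 := hj (i, ms i) (Finset.mem_image_of_mem _ hi)
        have h2 := hmμ j i
        simp only [ms] at h1
        omega
      refine ⟨?_, j, ?_⟩
      · intro i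
        by_cases hi : i ∈ σ
        · have := hlt i hi; simp only [chi, hi, if_pos]; omega
        · simp [chi, hi]
      · intro i
        by_cases hi : i ∈ σ
        · have := hlt i hi
          simp only [Pi.sub_apply, chi, hi, if_pos]
          omega
        · simp only [Pi.sub_apply, chi, hi, if_neg, not_false_iff]
          simpa using hmμ j i
  · intro σ σ' _ _ h
    have hinj : Function.Injective (fun i : Fin n => (i, ms i)) :=
      fun a b hab => congrArg Prod.fst hab
    exact Finset.image_injective hinj h
  · rintro τ ⟨j, hj⟩ htop
    have hlt : ∀ p ∈ τ, m j p.1 < μ p.1 := by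
      intro p hp
      have h1 := (hj p hp).1
      have h2 := (htop p hp).2
      have h3 := hmμ j p.1
      simp only [ms] at h1 h2
      omega
    refine ⟨τ.image Prod.fst, ⟨?_, j, ?_⟩, ?_⟩
    · intro i
      by_cases hi : i ∈ τ.image Prod.fst
      · obtain ⟨p, hp, rfl⟩ := Finset.mem_image.mp hi
        have := hlt p hp
        simp only [chi, hi, if_pos]
        omega
      · simp [chi, hi]
    · intro i
      by_cases hi : i ∈ τ.image Prod.fst
      · obtain ⟨p, hp, rfl⟩ := Finset.mem_image.mp hi
        have := hlt p hp
        simp only [Pi.sub_apply, chi, hi, if_pos]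
        omega
      · simp only [Pi.sub_apply, chi, hi, if_neg, not_false_iff]
        simpa using hmμ j i
    · ext p
      simp only [top, Finset.mem_image]
      constructor
      · intro hp
        exact ⟨p.1, ⟨p, hp, rfl⟩, Prod.ext rfl (htop p hp).2.symm⟩
      · rintro ⟨i, ⟨q, hq, rfl⟩, rfl⟩
        have h : (q.1, ms q.1) = q := Prod.ext rfl (htop q hq).2.symm
        rw [h]; exact hq
end

section
/- Let I be a monomial ideal in k[x_1,…,x_n] with minimal generator exponent vectors m_1,…,m_r and μ = μ_I their componentwise maximum. Let G(I^∨) denote the set of componentwise-minimal elements of {ν ∈ ℕ^n : x^ν ∈ I^∨}, where x^ν ∈ I^∨ iff for every j ∈ {1,…,r} there exists i with (m_j)_i > 0 and ν_i ≥ μ_i + 1 − (m_j)_i. Then the Alexander dual of the polarization P(I) is generated by ⋃_{ν ∈ G(I^∨)} M^ν, where M^ν = {∏_{i ∈ supp(ν)} x_{i,j_i} : 1 ≤ j_i ≤ μ_i + 1 − ν_i for each i ∈ supp(ν)}. Concretely, for a monomial x^β in the polarized variables (β : {(i,k) : 1 ≤ k ≤ μ_i} → ℕ): x^β lies in P(I)^∨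 — i.e., for every j there is a pair (i,k) with k ≤ (m_j)_i and β_{(i,k)} ≥ 1 — if and only if there exist ν ∈ G(I^∨) and a choice of indices j_i with 1 ≤ j_i ≤ μ_i + 1 − ν_i and β_{(i,j_i)} ≥ 1 for every i ∈ supp(ν). -/
lemma my_exists_minimal_le {α : Type*} [PartialOrder α] [WellFoundedLT α]
    (P : α → Prop) (a : α) (h : P a) : ∃ b, b ≤ a ∧ Minimal P b := by
  obtain ⟨b, ⟨hPb, hba⟩, hmin⟩ :=
    (IsWellFounded.wf (r := (· < · : α → α → Prop))).has_min {x | P x ∧ x ≤ a} ⟨a, h, le_refl a⟩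
  exact ⟨b, hba, hPb, fun y hy hyb => le_of_eq
    ((lt_or_eq_of_le hyb).resolve_left (fun hlt => hmin y ⟨hy, hyb.trans hba⟩ hlt)).symm⟩


/-- Let `I` be a monomial ideal in `k[x_1,…,x_n]` with minimal generator
exponent vectors `m_1,…,m_r` and `μ = μ_I` their componentwise maximum.  Let `G(I^∨)` be
the set of componentwise-minimal elements of `{ν : x^ν ∈ I^∨}`, where `x^ν ∈ I^∨` iff for
every `j` there exists `i` with `(m_j)_i > 0` and `ν_i ≥ μ_i + 1 - (m_j)_i`.  Then the
Alexander dual of the polarization `P(I)` is generated by `⋃_{ν ∈ G(I^∨)} M^ν`, where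
`M^ν = {∏_{i ∈ supp ν} x_{i,j_i} : 1 ≤ j_i ≤ μ_i + 1 - ν_i}`.  Concretely, for a monomial
`x^β` in the polarized variables: `x^β ∈ P(I)^∨` — i.e. for every `j` there is a pair
`(i,k)` with `1 ≤ k ≤ (m_j)_i` and `β_{(i,k)} ≥ 1` — iff there exist `ν ∈ G(I^∨)` and a
choice of indices `j_i` with `1 ≤ j_i ≤ μ_i + 1 - ν_i` and `β_{(i,j_i)} ≥ 1` for every
`i ∈ supp ν`. -/
theorem alexanderDual_of_polarization {n r : ℕ}
    (m : Fin r → Fin n → ℕ)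
    (hmin : ∀ j j' : Fin r, m j ≤ m j' → j = j')
    (μ : Fin n → ℕ)
    (hμ : ∀ i, IsGreatest (Set.range fun j => m j i) (μ i))
    (β : Fin n × ℕ → ℕ) :
    (∀ j : Fin r, ∃ (i : Fin n) (k : ℕ), 1 ≤ k ∧ k ≤ m j i ∧ 1 ≤ β (i, k))
      ↔ ∃ ν : Fin n → ℕ,
          Minimal (fun ν' : Fin n → ℕ =>
            ∀ j : Fin r, ∃ i : Fin n, 0 < m j i ∧ μ i + 1 - m j i ≤ ν' i) ν ∧
          ∃ c : Fin n → ℕ, ∀ i : Fin n, 0 < ν i →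
            1 ≤ c i ∧ c i ≤ μ i + 1 - ν i ∧ 1 ≤ β (i, c i) := by
  classical
  have hmμ : ∀ j i, m j i ≤ μ i := fun j i => (hμ i).2 ⟨j, rfl⟩
  constructor
  · intro h
    -- S i : set of candidate indices k
    set S : Fin n → Set ℕ := fun i => {k | 1 ≤ k ∧ k ≤ μ i ∧ 1 ≤ β (i, k)} with hS
    set ν : Fin n → ℕ := fun i => if (S i).Nonempty then μ i + 1 - sInf (S i) else 0 with hν
    have hmem : ∀ i, (S i).Nonempty → sInf (S i) ∈ S i := fun i hi => Nat.sInf_mem hi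
    have hPν : ∀ j : Fin r, ∃ i : Fin n, 0 < m j i ∧ μ i + 1 - m j i ≤ ν i := by
      intro j
      obtain ⟨i, k, hk1, hkm, hkβ⟩ := h j
      have hne : (S i).Nonempty := ⟨k, hk1, hkm.trans (hmμ j i), hkβ⟩
      refine ⟨i, lt_of_lt_of_le hk1 hkm, ?_⟩
      have hinf : sInf (S i) ≤ k := Nat.sInf_le ⟨hk1, hkm.trans (hmμ j i), hkβ⟩
      simp only [hν, if_pos hne]
      omega
    obtain ⟨ν₀, hle, hminν₀⟩ := my_exists_minimal_le
      (fun ν' : Fin n → ℕ => ∀ j : Fin r, ∃ i : Fin n, 0 < m j i ∧ μ i + 1 - m j i ≤ ν' i) ν hPν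
    refine ⟨ν₀, hminν₀, fun i => if (S i).Nonempty then sInf (S i) else 0, fun i hi => ?_⟩
    have hνi : 0 < ν i := lt_of_lt_of_le hi (hle i)
    have hne : (S i).Nonempty := by
      by_contra hcon
      rw [Set.not_nonempty_iff_eq_empty] at hcon
      simp [hν, hcon] at hνi
    obtain ⟨h1, h2, h3⟩ := hmem i hne
    have hνeq : ν i = μ i + 1 - sInf (S i) := by simp [hν, hne]
    have h4 : ν₀ i ≤ μ i + 1 - sInf (S i) := hνeq ▸ hle i
    refine ⟨by simpa [hne] using h1, ?_, by simpa [hne] using h3⟩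
    simp only [if_pos hne]
    omega
  · rintro ⟨ν, ⟨hPν, -⟩, c, hc⟩ j
    obtain ⟨i, hmi, hνi⟩ := hPν j
    have hνpos : 0 < ν i := by have := hmμ j i; omega
    obtain ⟨h1, h2, h3⟩ := hc i hνpos
    refine ⟨i, c i, h1, ?_, h3⟩
    have := hmμ j i
    omega
end
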